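/- In the fixed-size system where at each step, with probability p a uniformly random agent is replaced by an independent newcomer (mean 0, variance σ²) and with probability 1−p a uniform random-pair gossip averaging occurs, the vector X = (E x̄², E x²‾) evolves as X' = A X + b with A = [[1 − 2p/n, p/n²], [(1−p)/n, 1 − 1/n]] and b = (pσ²/n², pσ²/n). -/

import Mathlib

open Finset MeasureTheory ProbabilityTheory

noncomputable def mean {n : ℕ} (v : Fin n → ℝ) : ℝ := (∑ k, v k) / n

noncomputable def meanSq {n : ℕ} (v : Fin n → ℝ) : ℝ := (∑ k, v k ^ 2) / n

noncomputable def gossip {n : ℕ} (v : Fin n → ℝ) (i j : Fin n) : Fin n → ℝ :=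
  fun k => if k = i ∨ k = j then (v i + v j) / 2 else v k

lemma mean_update {n : ℕ} (v : Fin n → ℝ) (j : Fin n) (c : ℝ) :
    mean (Function.update v j c) = ((∑ k, v k) + c - v j) / n := by
  unfold mean
  rw [Finset.sum_update_of_mem (Finset.mem_univ j),
    Finset.sum_sdiff_eq_sub (Finset.subset_univ _)]
  simp; ring_nf

lemma meanSq_update {n : ℕ} (v : Fin n → ℝ) (j : Fin n) (c : ℝ) :
    meanSq (Function.update v j c) = ((∑ k, v k ^ 2) + c ^ 2 - v j ^ 2) / n := by
  unfold meanSq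
  have h : ∀ k, (Function.update v j c k) ^ 2 = Function.update (fun k => v k ^ 2) j (c ^ 2) k := by
    intro k
    simp [Function.update_apply, apply_ite (· ^ 2)]
  rw [Finset.sum_congr rfl fun k _ => h k,
    Finset.sum_update_of_mem (Finset.mem_univ j),
    Finset.sum_sdiff_eq_sub (Finset.subset_univ _), Finset.sum_singleton]
  ring

lemma gossip_self {n : ℕ} (v : Fin n → ℝ) (i : Fin n) : gossip v i i = v := by
  funext k
  unfold gossip
  by_cases h : k = i
  · subst h; rw [if_pos (Or.inl rfl)]; ring
  · rw [if_neg (by tauto)]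

lemma sum_gossip {n : ℕ} (v : Fin n → ℝ) (i j : Fin n) (f : ℝ → ℝ) :
    ∑ k, f (gossip v i j k) = ∑ k ∈ univ \ ({i, j} : Finset (Fin n)), f (v k)
      + (if i = j then f (v i) else 2 * f ((v i + v j) / 2)) := by
  rw [← Finset.sum_sdiff (Finset.subset_univ ({i, j} : Finset (Fin n)))]
  congr 1
  · apply Finset.sum_congr rfl
    intro k hk
    simp only [Finset.mem_sdiff, Finset.mem_insert, Finset.mem_singleton] at hk
    unfold gossip
    rw [if_neg (by tauto)]
  · by_cases h : i = j
    · subst h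
      simp [gossip]
    · rw [Finset.sum_pair h, if_neg h]
      unfold gossip
      rw [if_pos (Or.inl rfl), if_pos (Or.inr rfl)]
      ring

lemma mean_gossip {n : ℕ} (v : Fin n → ℝ) (i j : Fin n) :
    mean (gossip v i j) = mean v := by
  unfold mean
  congr 1
  have hs := sum_gossip v i j id
  simp only [id_eq] at hs
  rw [hs]
  rw [← Finset.sum_sdiff (Finset.subset_univ ({i, j} : Finset (Fin n)))]
  by_cases h : i = j
  · subst h; simp
  · rw [if_neg h, Finset.sum_pair h]
    simp; ring

lemma meanSq_gossip {n : ℕ} (v : Fin n → ℝ) (i j : Fin n) :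
    meanSq (gossip v i j) = meanSq v - (v i - v j) ^ 2 / (2 * n) := by
  unfold meanSq
  rw [sum_gossip v i j (· ^ 2)]
  rw [show (∑ k, v k ^ 2) = ∑ k ∈ univ \ ({i, j} : Finset (Fin n)), v k ^ 2
      + (if i = j then v i ^ 2 else v i ^ 2 + v j ^ 2) from ?_]
  · by_cases h : i = j
    · subst h; simp
    · rw [if_neg h, if_neg h]
      ring
  · rw [← Finset.sum_sdiff (Finset.subset_univ ({i, j} : Finset (Fin n)))]
    by_cases h : i = j
    · subst h; simp
    · rw [if_neg h, Finset.sum_pair h]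

lemma sum_mean_update_sq {n : ℕ} (v : Fin n → ℝ) (c : ℝ) :
    ∑ j, (mean (Function.update v j c)) ^ 2
      = (((n : ℝ) - 2) * (∑ k, v k) ^ 2 + (2 * n - 2) * ((∑ k, v k) * c)
          + n * c ^ 2 + ∑ k, v k ^ 2) / (n : ℝ) ^ 2 := by
  simp_rw [mean_update, div_pow]
  rw [← Finset.sum_div]
  congr 1
  have h : ∀ j : Fin n, ((∑ k, v k) + c - v j) ^ 2
      = ((∑ k, v k) + c) ^ 2 - 2 * ((∑ k, v k) + c) * v j + v j ^ 2 := fun j => by ring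
  rw [Finset.sum_congr rfl fun j _ => h j]
  rw [Finset.sum_add_distrib, Finset.sum_sub_distrib, Finset.sum_const,
    ← Finset.mul_sum, Finset.card_univ, Fintype.card_fin, nsmul_eq_mul]
  ring

lemma sum_meanSq_update {n : ℕ} (v : Fin n → ℝ) (c : ℝ) :
    ∑ j, meanSq (Function.update v j c)
      = (((n : ℝ) - 1) * (∑ k, v k ^ 2) + n * c ^ 2) / (n : ℝ) := by
  simp_rw [meanSq_update]
  rw [← Finset.sum_div]
  congr 1
  rw [Finset.sum_sub_distrib, Finset.sum_const,
    Finset.card_univ, Fintype.card_fin, nsmul_eq_mul]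
  ring

lemma sum_sum_sub_sq {n : ℕ} (v : Fin n → ℝ) :
    ∑ i, ∑ j, (v i - v j) ^ 2 = 2 * n * (∑ k, v k ^ 2) - 2 * (∑ k, v k) ^ 2 := by
  have h : ∀ i : Fin n, ∑ j, (v i - v j) ^ 2
      = (n : ℝ) * v i ^ 2 - 2 * v i * (∑ k, v k) + ∑ k, v k ^ 2 := by
    intro i
    have h2 : ∀ j : Fin n, (v i - v j) ^ 2 = v i ^ 2 - 2 * v i * v j + v j ^ 2 := fun j => by ring
    rw [Finset.sum_congr rfl fun j _ => h2 j]
    rw [Finset.sum_add_distrib, Finset.sum_sub_distrib, Finset.sum_const,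
      ← Finset.mul_sum, Finset.card_univ, Fintype.card_fin, nsmul_eq_mul]
  rw [Finset.sum_congr rfl fun i _ => h i]
  rw [Finset.sum_add_distrib, Finset.sum_sub_distrib, Finset.sum_const,
    ← Finset.mul_sum, ← Finset.sum_mul, Finset.card_univ, Fintype.card_fin, nsmul_eq_mul]
  have h2 : ∑ i, 2 * v i = 2 * ∑ i, v i := by rw [Finset.mul_sum]
  rw [h2]
  ring

lemma integral_combo4 {Ω : Type*} [MeasureSpace Ω] (a b c d : ℝ) (f g h k : Ω → ℝ)
    (hf : Integrable f) (hg : Integrable g) (hh : Integrable h) (hk : Integrable k) :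
    ∫ ω, (a * f ω + b * g ω + c * h ω + d * k ω)
      = a * (∫ ω, f ω) + b * (∫ ω, g ω) + c * (∫ ω, h ω) + d * (∫ ω, k ω) := by
  have h1 : Integrable (fun ω => a * f ω) := hf.const_mul a
  have h2 : Integrable (fun ω => b * g ω) := hg.const_mul b
  have h3 : Integrable (fun ω => c * h ω) := hh.const_mul c
  have h4 : Integrable (fun ω => d * k ω) := hk.const_mul d
  have h12 : Integrable (fun ω => a * f ω + b * g ω) := h1.add h2
  have h123 : Integrable (fun ω => a * f ω + b * g ω + c * h ω) := h12.add h3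
  rw [integral_add h123 h4, integral_add h12 h3, integral_add h1 h2,
    integral_const_mul, integral_const_mul, integral_const_mul, integral_const_mul]

/-- One step of the fixed-size system: with probability `p` a uniformly random agent is
replaced by an independent newcomer `ξ` (mean `0`, second moment `σ²`), and with
probability `1 - p` a uniform random-pair gossip occurs.  The vector
`X = (E x̄², E x²‾)` evolves as `X' = A X + b` with
`A = [[1 - 2p/n, p/n²], [(1-p)/n, 1 - 1/n]]` and `b = (pσ²/n², pσ²/n)`. -/
theorem fixed_size_step {Ω : Type*} [MeasureSpace Ω]
    [IsProbabilityMeasure (volume : Measure Ω)]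
    (n : ℕ) (hn : 2 ≤ n) (p σ2 : ℝ) (hp0 : 0 ≤ p) (hp1 : p ≤ 1)
    (x : Ω → Fin n → ℝ) (ξ : Ω → ℝ)
    (hxm : Measurable x) (hξm : Measurable ξ)
    (hindep : IndepFun x ξ)
    (hmean : ∫ ω, ξ ω = 0) (hsecond : ∫ ω, (ξ ω) ^ 2 = σ2)
    (hint1 : Integrable (fun ω => (mean (x ω)) ^ 2))
    (hint2 : Integrable (fun ω => meanSq (x ω)))
    (hint3 : Integrable ξ)
    (hint4 : Integrable (fun ω => (ξ ω) ^ 2)) :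
    p * ((∑ j, ∫ ω, (mean (Function.update (x ω) j (ξ ω))) ^ 2) / (n : ℝ))
        + (1 - p) * ((∑ i, ∑ j, ∫ ω, (mean (gossip (x ω) i j)) ^ 2) / (n : ℝ) ^ 2)
      = (1 - 2 * p / n) * (∫ ω, (mean (x ω)) ^ 2)
          + (p / (n : ℝ) ^ 2) * (∫ ω, meanSq (x ω)) + p * σ2 / (n : ℝ) ^ 2
    ∧ p * ((∑ j, ∫ ω, meanSq (Function.update (x ω) j (ξ ω))) / (n : ℝ))
        + (1 - p) * ((∑ i, ∑ j, ∫ ω, meanSq (gossip (x ω) i j)) / (n : ℝ) ^ 2)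
      = ((1 - p) / n) * (∫ ω, (mean (x ω)) ^ 2)
          + (1 - 1 / (n : ℝ)) * (∫ ω, meanSq (x ω)) + p * σ2 / (n : ℝ) := by
  have hnpos : (0 : ℝ) < n := by exact_mod_cast Nat.lt_of_lt_of_le Nat.zero_lt_two hn
  have hn0 : (n : ℝ) ≠ 0 := ne_of_gt hnpos
  set I1 := ∫ ω, (mean (x ω)) ^ 2 with hI1def
  set I2 := ∫ ω, meanSq (x ω) with hI2def
  -- measurability
  have hxk : ∀ k, Measurable fun ω => x ω k := fun k => (measurable_pi_apply k).comp hxm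
  have hSm : Measurable fun ω => ∑ k, x ω k := Finset.measurable_sum _ fun k _ => hxk k
  -- rewriting sums in terms of mean/meanSq
  have heS : (fun ω => (∑ k, x ω k) ^ 2) = fun ω => (n : ℝ) ^ 2 * (mean (x ω)) ^ 2 := by
    funext ω; unfold mean; field_simp
  have heQ : (fun ω => ∑ k, (x ω k) ^ 2) = fun ω => (n : ℝ) * meanSq (x ω) := by
    funext ω; unfold meanSq; field_simp
  -- integrability facts
  have hS2 : Integrable (fun ω => (∑ k, x ω k) ^ 2) := by rw [heS]; exact hint1.const_mul _
  have hQi : Integrable (fun ω => ∑ k, (x ω k) ^ 2) := by rw [heQ]; exact hint2.const_mul _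
  have hSi : Integrable (fun ω => ∑ k, x ω k) := by
    have hbd : Integrable (fun ω => 1 + (∑ k, x ω k) ^ 2) := (integrable_const 1).add hS2
    refine Integrable.mono' hbd hSm.aestronglyMeasurable
      (Filter.Eventually.of_forall fun ω => ?_)
    show ‖∑ k, x ω k‖ ≤ 1 + (∑ k, x ω k) ^ 2
    rw [Real.norm_eq_abs]
    nlinarith [sq_nonneg (|∑ k, x ω k| - 1), sq_abs (∑ k, x ω k), abs_nonneg (∑ k, x ω k)]
  have hxk2 : ∀ k, Integrable (fun ω => (x ω k) ^ 2) := by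
    intro k
    refine Integrable.mono' hQi ((hxk k).pow_const 2).aestronglyMeasurable
      (Filter.Eventually.of_forall fun ω => ?_)
    show ‖(x ω k) ^ 2‖ ≤ ∑ k, (x ω k) ^ 2
    rw [Real.norm_eq_abs, abs_of_nonneg (sq_nonneg _)]
    exact Finset.single_le_sum (f := fun k => (x ω k) ^ 2) (fun i _ => sq_nonneg _)
      (Finset.mem_univ k)
  have hSξind : IndepFun (fun ω => ∑ k, x ω k) ξ :=
    hindep.comp (Finset.measurable_sum _ fun k _ => measurable_pi_apply k) measurable_id
  have hSξint : Integrable (fun ω => (∑ k, x ω k) * ξ ω) :=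
    hSξind.integrable_mul hSi hint3
  have hISξ : ∫ ω, (∑ k, x ω k) * ξ ω = 0 := by
    have h := IndepFun.integral_mul_eq_mul_integral hSξind hSm.aestronglyMeasurable hξm.aestronglyMeasurable
    rw [show (fun ω => (∑ k, x ω k) * ξ ω) = (fun ω => ∑ k, x ω k) * ξ from rfl, h, hmean,
      mul_zero]
  have hIS2 : ∫ ω, (∑ k, x ω k) ^ 2 = (n : ℝ) ^ 2 * I1 := by
    rw [heS, integral_const_mul]
  have hIQ : ∫ ω, (∑ k, (x ω k) ^ 2) = (n : ℝ) * I2 := by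
    rw [heQ, integral_const_mul]
  have hdij : ∀ i j : Fin n, Integrable (fun ω => (x ω i - x ω j) ^ 2) := by
    intro i j
    have hbd : Integrable (fun ω => 4 * ∑ k, (x ω k) ^ 2) := hQi.const_mul 4
    refine Integrable.mono' hbd
      (((hxk i).sub (hxk j)).pow_const 2).aestronglyMeasurable
      (Filter.Eventually.of_forall fun ω => ?_)
    show ‖(x ω i - x ω j) ^ 2‖ ≤ 4 * ∑ k, (x ω k) ^ 2
    rw [Real.norm_eq_abs, abs_of_nonneg (sq_nonneg _)]
    have h1 : (x ω i) ^ 2 ≤ ∑ k, (x ω k) ^ 2 :=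
      Finset.single_le_sum (f := fun k => (x ω k) ^ 2) (fun i _ => sq_nonneg _)
        (Finset.mem_univ i)
    have h2 : (x ω j) ^ 2 ≤ ∑ k, (x ω k) ^ 2 :=
      Finset.single_le_sum (f := fun k => (x ω k) ^ 2) (fun i _ => sq_nonneg _)
        (Finset.mem_univ j)
    nlinarith [sq_nonneg (x ω i + x ω j)]
  have hupm : ∀ j, Integrable (fun ω => (mean (Function.update (x ω) j (ξ ω))) ^ 2) := by
    intro j
    have he : (fun ω => (mean (Function.update (x ω) j (ξ ω))) ^ 2)
        = fun ω => (((∑ k, x ω k) + ξ ω - x ω j) / n) ^ 2 :=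
      funext fun ω => by rw [mean_update]
    rw [he]
    have hbd : Integrable
        (fun ω => (3 / (n : ℝ) ^ 2) * ((∑ k, x ω k) ^ 2 + (ξ ω) ^ 2 + (x ω j) ^ 2)) :=
      Integrable.const_mul ((hS2.add hint4).add (hxk2 j)) _
    refine Integrable.mono' hbd
      ((((hSm.add hξm).sub (hxk j)).div_const _).pow_const 2).aestronglyMeasurable
      (Filter.Eventually.of_forall fun ω => ?_)
    show ‖(((∑ k, x ω k) + ξ ω - x ω j) / n) ^ 2‖
        ≤ (3 / (n : ℝ) ^ 2) * ((∑ k, x ω k) ^ 2 + (ξ ω) ^ 2 + (x ω j) ^ 2)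
    rw [Real.norm_eq_abs, abs_of_nonneg (sq_nonneg _)]
    have hb : ((∑ k, x ω k) + ξ ω - x ω j) ^ 2
        ≤ 3 * ((∑ k, x ω k) ^ 2 + (ξ ω) ^ 2 + (x ω j) ^ 2) := by
      nlinarith [sq_nonneg ((∑ k, x ω k) - ξ ω), sq_nonneg ((∑ k, x ω k) + x ω j),
        sq_nonneg (ξ ω + x ω j)]
    rw [show (3 / (n : ℝ) ^ 2) * ((∑ k, x ω k) ^ 2 + (ξ ω) ^ 2 + (x ω j) ^ 2)
        = 3 * ((∑ k, x ω k) ^ 2 + (ξ ω) ^ 2 + (x ω j) ^ 2) / (n : ℝ) ^ 2 from by ring,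
      show (((∑ k, x ω k) + ξ ω - x ω j) / (n : ℝ)) ^ 2
        = ((∑ k, x ω k) + ξ ω - x ω j) ^ 2 / (n : ℝ) ^ 2 from by ring]
    gcongr
  have hupm2 : ∀ j, Integrable (fun ω => meanSq (Function.update (x ω) j (ξ ω))) := by
    intro j
    have he : (fun ω => meanSq (Function.update (x ω) j (ξ ω)))
        = fun ω => ((∑ k, (x ω k) ^ 2) + (ξ ω) ^ 2 - (x ω j) ^ 2) / n :=
      funext fun ω => by rw [meanSq_update]
    rw [he]
    exact ((hQi.add hint4).sub (hxk2 j)).div_const _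
  -- main computation A
  have hA : (∑ j, ∫ ω, (mean (Function.update (x ω) j (ξ ω))) ^ 2)
      = (((n : ℝ) - 2) / (n : ℝ) ^ 2) * ((n : ℝ) ^ 2 * I1)
        + ((2 * (n : ℝ) - 2) / (n : ℝ) ^ 2) * 0
        + ((n : ℝ) / (n : ℝ) ^ 2) * σ2 + (1 / (n : ℝ) ^ 2) * ((n : ℝ) * I2) := by
    rw [← integral_finset_sum _ fun j _ => hupm j]
    have he : (fun ω => ∑ j, (mean (Function.update (x ω) j (ξ ω))) ^ 2)
        = fun ω => (((n : ℝ) - 2) / (n : ℝ) ^ 2) * ((∑ k, x ω k) ^ 2)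
            + ((2 * (n : ℝ) - 2) / (n : ℝ) ^ 2) * ((∑ k, x ω k) * ξ ω)
            + ((n : ℝ) / (n : ℝ) ^ 2) * ((ξ ω) ^ 2)
            + (1 / (n : ℝ) ^ 2) * (∑ k, (x ω k) ^ 2) :=
      funext fun ω => by rw [sum_mean_update_sq]; push_cast; ring
    rw [he, integral_combo4 _ _ _ _ _ _ _ _ hS2 hSξint hint4 hQi, hIS2, hISξ, hsecond, hIQ]
  -- main computation B
  have hB : (∑ i, ∑ j, ∫ ω, (mean (gossip (x ω) i j)) ^ 2) = (n : ℝ) ^ 2 * I1 := by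
    simp only [mean_gossip]
    rw [Finset.sum_const, Finset.sum_const, Finset.card_univ, Fintype.card_fin,
      nsmul_eq_mul, nsmul_eq_mul, ← hI1def]
    ring
  -- main computation C
  have hC : (∑ j, ∫ ω, meanSq (Function.update (x ω) j (ξ ω)))
      = (((n : ℝ) - 1) / n) * ((n : ℝ) * I2) + ((n : ℝ) / n) * σ2 := by
    rw [← integral_finset_sum _ fun j _ => hupm2 j]
    have he : (fun ω => ∑ j, meanSq (Function.update (x ω) j (ξ ω)))
        = fun ω => (((n : ℝ) - 1) / n) * (∑ k, (x ω k) ^ 2) + ((n : ℝ) / n) * ((ξ ω) ^ 2) :=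
      funext fun ω => by rw [sum_meanSq_update]; push_cast; ring
    have h1 : Integrable (fun ω => (((n : ℝ) - 1) / n) * (∑ k, (x ω k) ^ 2)) :=
      hQi.const_mul _
    have h2 : Integrable (fun ω => ((n : ℝ) / n) * ((ξ ω) ^ 2)) := hint4.const_mul _
    rw [he, integral_add h1 h2, integral_const_mul, integral_const_mul, hIQ, hsecond]
  -- main computation D
  have hDsum : (∑ i, ∑ j, ∫ ω, (x ω i - x ω j) ^ 2)
      = 2 * (n : ℝ) * ((n : ℝ) * I2) - 2 * ((n : ℝ) ^ 2 * I1) := by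
    rw [show (∑ i, ∑ j, ∫ ω, (x ω i - x ω j) ^ 2)
        = ∑ i, ∫ ω, ∑ j, (x ω i - x ω j) ^ 2 from
        Finset.sum_congr rfl fun i _ => (integral_finset_sum _ fun j _ => hdij i j).symm,
      ← integral_finset_sum _ fun i _ => integrable_finset_sum _ fun j _ => hdij i j]
    have he : (fun ω => ∑ i, ∑ j, (x ω i - x ω j) ^ 2)
        = fun ω => 2 * (n : ℝ) * (∑ k, (x ω k) ^ 2) - 2 * ((∑ k, x ω k) ^ 2) :=
      funext fun ω => sum_sum_sub_sq (x ω)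
    have h1 : Integrable (fun ω => 2 * (n : ℝ) * (∑ k, (x ω k) ^ 2)) := hQi.const_mul _
    have h2 : Integrable (fun ω => 2 * ((∑ k, x ω k) ^ 2)) := hS2.const_mul 2
    rw [he, integral_sub h1 h2, integral_const_mul, integral_const_mul, hIQ, hIS2]
  have hD : (∑ i, ∑ j, ∫ ω, meanSq (gossip (x ω) i j))
      = (n : ℝ) ^ 2 * I2
        - (2 * (n : ℝ) * ((n : ℝ) * I2) - 2 * ((n : ℝ) ^ 2 * I1)) / (2 * n) := by
    have he : ∀ i j : Fin n, (∫ ω, meanSq (gossip (x ω) i j))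
        = I2 - (∫ ω, (x ω i - x ω j) ^ 2) / (2 * n) := by
      intro i j
      rw [show (fun ω => meanSq (gossip (x ω) i j))
          = fun ω => meanSq (x ω) - (x ω i - x ω j) ^ 2 / (2 * n) from
          funext fun ω => meanSq_gossip (x ω) i j,
        integral_sub hint2 ((hdij i j).div_const _), integral_div, hI2def]
    simp_rw [he]
    rw [show (∑ i : Fin n, ∑ j : Fin n, (I2 - (∫ ω, (x ω i - x ω j) ^ 2) / (2 * (n : ℝ))))
        = ∑ i : Fin n, ∑ j : Fin n, I2
          - (∑ i : Fin n, ∑ j : Fin n, ∫ ω, (x ω i - x ω j) ^ 2) / (2 * (n : ℝ)) from ?_]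
    · rw [Finset.sum_const, Finset.sum_const, Finset.card_univ, Fintype.card_fin,
        nsmul_eq_mul, nsmul_eq_mul, hDsum]
      ring
    · rw [Finset.sum_div]
      rw [← Finset.sum_sub_distrib]
      refine Finset.sum_congr rfl fun i _ => ?_
      rw [Finset.sum_div, ← Finset.sum_sub_distrib]
  constructor
  · rw [hA, hB]
    field_simp
    ring
  · rw [hC, hD]
    field_simp
    ring
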